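/- Monotonicity of Rényi divergence under conditional dominance: let α > 1, and let (U,V,W) and (U',V',W') be tuples of jointly distributed discrete random variables. If for every u in the support of U, D_α(V|_{U=u} ‖ V'|_{U'=u}) ≤ D_α(W|_{U=u} ‖ W'|_{U'=u}), then D_α((U,V)‖(U',V')) ≤ D_α((U,W)‖(U',W')). -/

import Mathlib

open Finset ENNReal

def IsPMF {Ω : Type*} [Fintype Ω] (p : Ω → ℝ≥0∞) : Prop := ∑ x, p x = 1

/-- Rényi divergence of order `α` on a finite space, with `ℝ≥0∞` conventions. -/
noncomputable def renyiDiv (α : ℝ) {Ω : Type*} [Fintype Ω] (p q : Ω → ℝ≥0∞) : EReal :=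
  ((α - 1)⁻¹ : ℝ) * ENNReal.log (∑ x, p x ^ α * q x ^ (1 - α))

lemma ereal_mul_le_mul_left {c : ℝ} (hc : 0 < c) {x y : EReal} :
    (c : EReal) * x ≤ (c : EReal) * y ↔ x ≤ y := by
  have hc' : (0 : EReal) < (c : EReal) := by exact_mod_cast hc
  have htop : (c : EReal) ≠ ⊤ := EReal.coe_ne_top c
  have hbot : (c : EReal) ≠ ⊥ := EReal.coe_ne_bot c
  constructor
  · intro h
    have h2 := EReal.div_le_div_right_of_nonneg hc'.le h
    rwa [mul_comm, mul_comm (c : EReal) y, ← EReal.mul_div, ← EReal.mul_div,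
      EReal.div_self hbot htop hc'.ne', mul_one, mul_one] at h2
  · intro h
    exact mul_le_mul_of_nonneg_left h hc'.le

lemma renyiDiv_le_iff {Ω Ω' : Type*} [Fintype Ω] [Fintype Ω'] {α : ℝ} (hα : 1 < α)
    (p q : Ω → ℝ≥0∞) (p' q' : Ω' → ℝ≥0∞) :
    renyiDiv α p q ≤ renyiDiv α p' q' ↔
      ∑ x, p x ^ α * q x ^ (1 - α) ≤ ∑ x, p' x ^ α * q' x ^ (1 - α) := by
  have hc : (0 : ℝ) < (α - 1)⁻¹ := inv_pos.mpr (sub_pos.mpr hα)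
  rw [renyiDiv, renyiDiv, ereal_mul_le_mul_left hc, ENNReal.log_le_log_iff]

lemma pmf_ne_top {Ω : Type*} [Fintype Ω] {p : Ω → ℝ≥0∞} (hp : IsPMF p) (x : Ω) : p x ≠ ⊤ := by
  have : p x ≤ 1 := hp ▸ Finset.single_le_sum (fun _ _ => zero_le) (mem_univ x)
  exact (this.trans_lt one_lt_top).ne

lemma split_sum {𝒰 𝒳 : Type*} [Fintype 𝒰] [Fintype 𝒳] {α : ℝ} (hα : 1 < α)
    (pU pU' : 𝒰 → ℝ≥0∞) (hU' : IsPMF pU')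
    (pX pX' : 𝒰 → 𝒳 → ℝ≥0∞) (hX' : ∀ u, IsPMF (pX' u)) :
    ∑ x : 𝒰 × 𝒳, (pU x.1 * pX x.1 x.2) ^ α * (pU' x.1 * pX' x.1 x.2) ^ (1 - α)
      = ∑ u, (pU u ^ α * pU' u ^ (1 - α)) * ∑ x, pX u x ^ α * pX' u x ^ (1 - α) := by
  rw [Fintype.sum_prod_type]
  refine Finset.sum_congr rfl fun u _ => ?_
  rw [Finset.mul_sum]
  refine Finset.sum_congr rfl fun x _ => ?_
  rw [ENNReal.mul_rpow_of_nonneg _ _ (by positivity),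
    ENNReal.mul_rpow_of_ne_top (pmf_ne_top hU' u) (pmf_ne_top (hX' u) x)]
  ring

/-- Monotonicity of Rényi divergence under conditional dominance: if for every `u`
in the support of `U` we have `D_α(V|_{U=u} ‖ V'|_{U'=u}) ≤ D_α(W|_{U=u} ‖ W'|_{U'=u})`,
then `D_α((U,V)‖(U',V')) ≤ D_α((U,W)‖(U',W'))`. -/
theorem renyiDiv_monotone_conditional {𝒰 𝒱 𝒲 : Type*} [Fintype 𝒰] [Fintype 𝒱] [Fintype 𝒲]
    (α : ℝ) (hα : 1 < α)
    (pU pU' : 𝒰 → ℝ≥0∞) (hU : IsPMF pU) (hU' : IsPMF pU')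
    (pV pV' : 𝒰 → 𝒱 → ℝ≥0∞) (hV : ∀ u, IsPMF (pV u)) (hV' : ∀ u, IsPMF (pV' u))
    (pW pW' : 𝒰 → 𝒲 → ℝ≥0∞) (hW : ∀ u, IsPMF (pW u)) (hW' : ∀ u, IsPMF (pW' u))
    (hcond : ∀ u, pU u ≠ 0 → renyiDiv α (pV u) (pV' u) ≤ renyiDiv α (pW u) (pW' u)) :
    renyiDiv α (fun p : 𝒰 × 𝒱 => pU p.1 * pV p.1 p.2)
               (fun p : 𝒰 × 𝒱 => pU' p.1 * pV' p.1 p.2) ≤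
    renyiDiv α (fun p : 𝒰 × 𝒲 => pU p.1 * pW p.1 p.2)
               (fun p : 𝒰 × 𝒲 => pU' p.1 * pW' p.1 p.2) := by
  rw [renyiDiv_le_iff hα]
  rw [split_sum hα pU pU' hU' pV pV' hV', split_sum hα pU pU' hU' pW pW' hW']
  refine Finset.sum_le_sum fun u _ => ?_
  by_cases hu : pU u = 0
  · simp [hu, ENNReal.zero_rpow_of_pos (by positivity : (0:ℝ) < α)]
  · refine mul_le_mul_right ?_ _
    exact (renyiDiv_le_iff hα _ _ _ _).mp (hcond u hu)
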